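/- The relation ∼ on arrows of Δ/C is generated by the elementary relation ≈, where a_* ≈ b_* : x → x' iff there exists an index i₀ such that a(i) = b(i) for all i ≠ i₀ and x'(min(a(i₀),b(i₀)) → max(a(i₀),b(i₀))) is an identity. -/

import Mathlib

open CategoryTheory

/-- An arrow in a category "is an identity" if its source and target coincide and it is
the identity of that object. -/
def IsIdArrow {C : Type*} [Category C] {X Y : C} (f : X ⟶ Y) : Prop :=
  ∃ h : X = Y, f = eqToHom h

/-- The relation `∼` of the paper on parallel maps of chains `a_*, b_* : x → x'` in the
category of simplices `Δ/C`: `a_* ∼ b_*` iff `x'(min (a i) (b i) → max (a i) (b i))` is an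
identity for every `i`.  Here a chain (an `n`-simplex of the nerve of `C`) is a functor
`Fin (n+1) ⥤ C` from the finite ordinal `[n]`. -/
def SimRel {C : Type*} [Category C] {n n' : ℕ} (x' : Fin (n' + 1) ⥤ C)
    (a b : Fin (n + 1) →o Fin (n' + 1)) : Prop :=
  ∀ i : Fin (n + 1),
    IsIdArrow (x'.map (homOfLE (min_le_max : min (a i) (b i) ≤ max (a i) (b i))))

/-- `a : [n] → [n']` underlies an arrow of `Δ/C` from the chain `x` to the chain `x'`
precisely when `x' ∘ a = x`. -/
def ChainCompat {C : Type*} [Category C] {n n' : ℕ} (x : Fin (n + 1) ⥤ C)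
    (x' : Fin (n' + 1) ⥤ C) (a : Fin (n + 1) →o Fin (n' + 1)) : Prop :=
  a.monotone.functor ⋙ x' = x

/-- The arrows `x → x'` of the category of simplices `Δ/C`. -/
def ChainArrow {C : Type*} [Category C] {n n' : ℕ} (x : Fin (n + 1) ⥤ C)
    (x' : Fin (n' + 1) ⥤ C) : Type _ :=
  { a : Fin (n + 1) →o Fin (n' + 1) // ChainCompat x x' a }

/-- The elementary relation `≈` on parallel arrows of `Δ/C`: `a_* ≈ b_*` iff `a` and `b`
agree except possibly at one index `i₀`, where `x'(min (a i₀) (b i₀) → max (a i₀) (b i₀))`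
is an identity. -/
def ElemRel {C : Type*} [Category C] {n n' : ℕ} {x : Fin (n + 1) ⥤ C}
    {x' : Fin (n' + 1) ⥤ C} (a b : ChainArrow x x') : Prop :=
  ∃ i₀ : Fin (n + 1), (∀ i, i ≠ i₀ → a.1 i = b.1 i) ∧
    IsIdArrow (x'.map (homOfLE (min_le_max : min (a.1 i₀) (b.1 i₀) ≤ max (a.1 i₀) (b.1 i₀))))

section Aux

open CategoryTheory

variable {C : Type*} [Category C]

lemma isId_eqToHom {X Y : C} (h : X = Y) : IsIdArrow (eqToHom h) := ⟨h, rfl⟩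

lemma isId_id (X : C) : IsIdArrow (𝟙 X) := ⟨rfl, by simp⟩

lemma isId_comp {X Y Z : C} {f : X ⟶ Y} {g : Y ⟶ Z} (hf : IsIdArrow f) (hg : IsIdArrow g) :
    IsIdArrow (f ≫ g) := by
  obtain ⟨h1, rfl⟩ := hf; obtain ⟨h2, rfl⟩ := hg
  exact ⟨h1.trans h2, by simp⟩

lemma isId_cancel_left {X Y Z : C} {f : X ⟶ Y} {g : Y ⟶ Z} (hf : IsIdArrow f)
    (hfg : IsIdArrow (f ≫ g)) : IsIdArrow g := by
  obtain ⟨h1, rfl⟩ := hf; obtain ⟨h2, hc⟩ := hfg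
  refine ⟨h1.symm.trans h2, ?_⟩
  calc g = eqToHom h1.symm ≫ (eqToHom h1 ≫ g) := by simp
    _ = eqToHom h1.symm ≫ eqToHom h2 := by rw [hc]
    _ = eqToHom (h1.symm.trans h2) := by simp

lemma isId_cancel_right {X Y Z : C} {f : X ⟶ Y} {g : Y ⟶ Z} (hg : IsIdArrow g)
    (hfg : IsIdArrow (f ≫ g)) : IsIdArrow f := by
  obtain ⟨h2, rfl⟩ := hg; obtain ⟨h1, hc⟩ := hfg
  refine ⟨h1.trans h2.symm, ?_⟩
  calc f = (f ≫ eqToHom h2) ≫ eqToHom h2.symm := by simp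
    _ = eqToHom h1 ≫ eqToHom h2.symm := by rw [hc]
    _ = eqToHom (h1.trans h2.symm) := by simp

variable {D : Type*} [LinearOrder D] (F : D ⥤ C)

lemma mapLE_congr {p q p' q' : D} (hp : p = p') (hq : q = q') (h : p ≤ q) (h' : p' ≤ q') :
    F.map (homOfLE h) = eqToHom (by rw [hp]) ≫ F.map (homOfLE h') ≫ eqToHom (by rw [hq]) := by
  subst hp; subst hq; simp

/-- `F` maps the interval between `p` and `q` (in whichever order) to an identity. -/
def IdInt (p q : D) : Prop :=
  IsIdArrow (F.map (homOfLE (min_le_max : min p q ≤ max p q)))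

lemma idInt_congr {p q p' q' : D} (hp : p = p') (hq : q = q') (h : IdInt F p q) :
    IdInt F p' q' := by subst hp; subst hq; exact h

lemma J_of_idInt {p q : D} (hpq : p ≤ q) (h : IdInt F p q) :
    IsIdArrow (F.map (homOfLE hpq)) := by
  rw [mapLE_congr F (min_eq_left hpq).symm (max_eq_right hpq).symm hpq min_le_max]
  exact isId_comp (isId_eqToHom _) (isId_comp h (isId_eqToHom _))

lemma idInt_of_J {p q : D} (hpq : p ≤ q) (h : IsIdArrow (F.map (homOfLE hpq))) :
    IdInt F p q := by
  unfold IdInt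
  rw [mapLE_congr F (min_eq_left hpq) (max_eq_right hpq) min_le_max hpq]
  exact isId_comp (isId_eqToHom _) (isId_comp h (isId_eqToHom _))

lemma idInt_refl (p : D) : IdInt F p p :=
  idInt_of_J F (le_refl p) ⟨rfl, by simp⟩

lemma idInt_symm {p q : D} (h : IdInt F p q) : IdInt F q p := by
  unfold IdInt at h ⊢
  rw [mapLE_congr F (min_comm q p) (max_comm q p) min_le_max min_le_max]
  exact isId_comp (isId_eqToHom _) (isId_comp h (isId_eqToHom _))

lemma map_comp_le {p q r : D} (h1 : p ≤ q) (h2 : q ≤ r) :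
    F.map (homOfLE h1) ≫ F.map (homOfLE h2) = F.map (homOfLE (h1.trans h2)) := by
  rw [← F.map_comp]; rfl

lemma idInt_trans {p q r : D} (h1 : IdInt F p q) (h2 : IdInt F q r) : IdInt F p r := by
  have key : ∀ u w : D, (huw : u ≤ w) → IdInt F u q → IdInt F q w → IdInt F u w := by
    intro u w huw hu hw
    apply idInt_of_J F huw
    rcases le_total q u with hq | hq
    · have j1 := J_of_idInt F hq (idInt_symm F hu)
      have j2 := J_of_idInt F (hq.trans huw) hw
      apply isId_cancel_left j1
      rw [map_comp_le]
      exact j2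
    · rcases le_total w q with hq' | hq'
      · have j1 := J_of_idInt F hq hu
        have j2 := J_of_idInt F hq' (idInt_symm F hw)
        apply isId_cancel_right j2
        rw [map_comp_le]
        exact j1
      · have := isId_comp (J_of_idInt F hq hu) (J_of_idInt F hq' hw)
        rwa [map_comp_le] at this
  rcases le_total p r with h | h
  · exact key p r h h1 h2
  · exact idInt_symm F (key r p h (idInt_symm F h2) (idInt_symm F h1))

end Aux

section Aux2

open CategoryTheory

variable {C : Type*} [Category C] {D : Type*} [LinearOrder D] (F : D ⥤ C)

lemma map_conj {p q p' q' : D} (hpq : p ≤ q) (hp' : p' ≤ p) (hq' : q' ≤ q) (hp'q' : p' ≤ q')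
    (h1 : IsIdArrow (F.map (homOfLE hp'))) (h2 : IsIdArrow (F.map (homOfLE hq')))
    (e1 : F.obj p = F.obj p') (e2 : F.obj q' = F.obj q) :
    F.map (homOfLE hpq) = eqToHom e1 ≫ F.map (homOfLE hp'q') ≫ eqToHom e2 := by
  obtain ⟨e1', he1⟩ := h1; obtain ⟨e2', he2⟩ := h2
  have hcomp : F.map (homOfLE hp') ≫ F.map (homOfLE hpq) =
      F.map (homOfLE hp'q') ≫ F.map (homOfLE hq') := by
    rw [map_comp_le, map_comp_le]
  rw [he1, he2] at hcomp
  calc F.map (homOfLE hpq) = eqToHom e1'.symm ≫ (eqToHom e1' ≫ F.map (homOfLE hpq)) := by simp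
    _ = eqToHom e1'.symm ≫ (F.map (homOfLE hp'q') ≫ eqToHom e2') := by rw [hcomp]
    _ = eqToHom e1 ≫ F.map (homOfLE hp'q') ≫ eqToHom e2 := by
        congr 1

lemma J_min_left {p q : D} (h : IdInt F p q) :
    IsIdArrow (F.map (homOfLE (min_le_left p q))) := by
  rcases le_total p q with hle | hle
  · rw [mapLE_congr F (min_eq_left hle) rfl _ (le_refl p)]
    exact isId_comp (isId_eqToHom _) (isId_comp ⟨rfl, by simp⟩ (isId_eqToHom _))
  · rw [mapLE_congr F rfl (max_eq_left hle).symm _ (min_le_max : min p q ≤ max p q)]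
    exact isId_comp (isId_eqToHom _) (isId_comp h (isId_eqToHom _))

lemma J_min_right {p q : D} (h : IdInt F p q) :
    IsIdArrow (F.map (homOfLE (min_le_right p q))) := by
  rcases le_total q p with hle | hle
  · rw [mapLE_congr F (min_eq_right hle) rfl _ (le_refl q)]
    exact isId_comp (isId_eqToHom _) (isId_comp ⟨rfl, by simp⟩ (isId_eqToHom _))
  · rw [mapLE_congr F rfl (max_eq_right hle).symm _ (min_le_max : min p q ≤ max p q)]
    exact isId_comp (isId_eqToHom _) (isId_comp h (isId_eqToHom _))

lemma idInt_obj {p q : D} (h : IdInt F p q) : F.obj p = F.obj q := by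
  have h1 := J_min_left F h
  have h2 := J_min_right F h
  exact h1.choose.symm.trans h2.choose

variable {n n' : ℕ}

lemma map_eq_of_simRel (x' : Fin (n' + 1) ⥤ C) {a c : Fin (n + 1) →o Fin (n' + 1)}
    (hs : SimRel x' a c) {i j : Fin (n + 1)} (hij : i ≤ j)
    (e1 : x'.obj (c i) = x'.obj (a i)) (e2 : x'.obj (a j) = x'.obj (c j)) :
    x'.map (homOfLE (c.monotone hij)) =
      eqToHom e1 ≫ x'.map (homOfLE (a.monotone hij)) ≫ eqToHom e2 := by
  have hsi : ∀ k, IdInt x' (a k) (c k) := hs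
  have hm : min (a i) (c i) ≤ min (a j) (c j) :=
    min_le_min (a.monotone hij) (c.monotone hij)
  have Ha := map_conj x' (a.monotone hij) (min_le_left (a i) (c i)) (min_le_left (a j) (c j)) hm
    (J_min_left x' (hsi i)) (J_min_left x' (hsi j))
    (J_min_left x' (hsi i)).choose.symm (J_min_left x' (hsi j)).choose
  have Hc := map_conj x' (c.monotone hij) (min_le_right (a i) (c i)) (min_le_right (a j) (c j)) hm
    (J_min_right x' (hsi i)) (J_min_right x' (hsi j))
    (J_min_right x' (hsi i)).choose.symm (J_min_right x' (hsi j)).choose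
  rw [Hc, Ha]
  simp [eqToHom_trans]

lemma compat_of_simRel {x : Fin (n + 1) ⥤ C} {x' : Fin (n' + 1) ⥤ C}
    {a c : Fin (n + 1) →o Fin (n' + 1)} (hc : ChainCompat x x' a) (hs : SimRel x' a c) :
    ChainCompat x x' c := by
  unfold ChainCompat at hc
  have hsi : ∀ k, IdInt x' (a k) (c k) := hs
  have hobj : ∀ i, (c.monotone.functor ⋙ x').obj i = x.obj i := fun i => by
    have h1 : x'.obj (a i) = x'.obj (c i) := idInt_obj x' (hsi i)
    have h2 : x'.obj (a i) = x.obj i := Functor.congr_obj hc i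
    exact h1.symm.trans h2
  refine CategoryTheory.Functor.ext hobj (fun i j f => ?_)
  have hij : i ≤ j := leOfHom f
  have h2 := Functor.congr_hom hc f
  show x'.map (homOfLE (c.monotone hij)) = _
  rw [map_eq_of_simRel x' hs hij (idInt_obj x' (hsi i)).symm (idInt_obj x' (hsi j))]
  have : x'.map (homOfLE (a.monotone hij)) = (a.monotone.functor ⋙ x').map f := rfl
  rw [this, h2]
  erw [Category.assoc, eqToHom_trans_assoc, Category.assoc, eqToHom_trans]
  rfl

end Aux2

section Aux3

open CategoryTheory

variable {C : Type*} [Category C] {n n' : ℕ}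

/-- Replace `u i` by `min (u i) (v i)` for the first `k` indices. -/
def mixFun (u v : Fin (n + 1) →o Fin (n' + 1)) (k : ℕ) : Fin (n + 1) →o Fin (n' + 1) :=
  ⟨fun i => if (i : ℕ) < k then min (u i) (v i) else u i, show Monotone _ by
    intro i j hij
    dsimp only
    split_ifs with h1 h2
    · exact min_le_min (u.monotone hij) (v.monotone hij)
    · exact le_trans (min_le_left _ _) (u.monotone hij)
    · exact absurd (lt_of_le_of_lt (show (i : ℕ) ≤ (j : ℕ) from hij) ‹(j : ℕ) < k›) h1
    · exact u.monotone hij⟩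


lemma simRel_mixFun (x' : Fin (n' + 1) ⥤ C) {u v : Fin (n + 1) →o Fin (n' + 1)}
    (hs : SimRel x' u v) (k : ℕ) : SimRel x' u (mixFun u v k) := by
  intro i
  show IdInt x' (u i) (mixFun u v k i)
  by_cases h : (i : ℕ) < k
  · refine idInt_congr x' rfl ?_ (idInt_symm x' (idInt_of_J x' (min_le_left (u i) (v i))
      (J_min_left x' (hs i))))
    simp [mixFun, h]
  · exact idInt_congr x' rfl (by simp [mixFun, h]) (idInt_refl x' (u i))

lemma mixFun_zero (u v : Fin (n + 1) →o Fin (n' + 1)) : mixFun u v 0 = u := by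
  ext i; simp [mixFun]

lemma mixFun_top (u v : Fin (n + 1) →o Fin (n' + 1)) (i : Fin (n + 1)) :
    mixFun u v (n + 1) i = min (u i) (v i) := by
  simp [mixFun, i.isLt]
  intro h; omega

section

variable {x : Fin (n + 1) ⥤ C} {x' : Fin (n' + 1) ⥤ C}

/-- The chain arrow obtained by mixing. -/
def mixArrow (a b : ChainArrow x x') (hs : SimRel x' a.1 b.1) (k : ℕ) : ChainArrow x x' :=
  ⟨mixFun a.1 b.1 k, compat_of_simRel a.2 (simRel_mixFun x' hs k)⟩

lemma elem_mixArrow (a b : ChainArrow x x') (hs : SimRel x' a.1 b.1) (k : ℕ) (hk : k < n + 1) :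
    ElemRel (mixArrow a b hs k) (mixArrow a b hs (k + 1)) := by
  refine ⟨⟨k, hk⟩, fun i hi => ?_, ?_⟩
  · have hik : (i : ℕ) ≠ k := fun h => hi (Fin.ext h)
    show mixFun a.1 b.1 k i = mixFun a.1 b.1 (k + 1) i
    by_cases h : (i : ℕ) < k
    · simp [mixFun, h, Nat.lt_succ_of_lt h]
      intro; omega
    · have h' : ¬ (i : ℕ) < k + 1 := by omega
      simp [mixFun, h, h']
      intro; omega
  · show IdInt x' (mixFun a.1 b.1 k ⟨k, hk⟩) (mixFun a.1 b.1 (k + 1) ⟨k, hk⟩)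
    refine idInt_congr x' ?_ ?_ (idInt_symm x' (idInt_of_J x'
      (min_le_left (a.1 ⟨k, hk⟩) (b.1 ⟨k, hk⟩)) (J_min_left x' (hs ⟨k, hk⟩))))
    · simp [mixFun]
    · simp [mixFun]

lemma eqvGen_mixArrow (a b : ChainArrow x x') (hs : SimRel x' a.1 b.1) :
    ∀ k, k ≤ n + 1 → Relation.EqvGen (ElemRel (x := x) (x' := x')) a (mixArrow a b hs k) := by
  intro k
  induction k with
  | zero =>
    intro _
    have h0 : mixArrow a b hs 0 = a := Subtype.ext (mixFun_zero a.1 b.1)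
    rw [h0]
    exact Relation.EqvGen.refl a
  | succ k ih =>
    intro hk
    exact Relation.EqvGen.trans _ _ _ (ih (by omega))
      (Relation.EqvGen.rel _ _ (elem_mixArrow a b hs k (by omega)))

end

end Aux3

section Aux4

open CategoryTheory

variable {C : Type*} [Category C] {n n' : ℕ}

lemma simRel_of_elem {x : Fin (n + 1) ⥤ C} {x' : Fin (n' + 1) ⥤ C} {a b : ChainArrow x x'}
    (h : ElemRel a b) : SimRel x' a.1 b.1 := by
  obtain ⟨i₀, hne, hid⟩ := h
  intro i
  by_cases hi : i = i₀
  · subst hi; exact hid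
  · exact idInt_congr x' rfl (hne i hi) (idInt_refl x' (a.1 i))

end Aux4


/-- the relation `∼` on arrows of `Δ/C` is the equivalence relation
generated by the elementary relation `≈`. -/
theorem simRel_eq_eqvGen_elemRel {C : Type*} [Category C] {n n' : ℕ}
    (x : Fin (n + 1) ⥤ C) (x' : Fin (n' + 1) ⥤ C) (a b : ChainArrow x x') :
    SimRel x' a.1 b.1 ↔ Relation.EqvGen (ElemRel (x := x) (x' := x')) a b := by
  constructor
  · intro hs
    have hs' : SimRel x' b.1 a.1 := fun i => idInt_symm x' (hs i)
    have hA := eqvGen_mixArrow a b hs (n + 1) le_rfl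
    have hB := eqvGen_mixArrow b a hs' (n + 1) le_rfl
    have heq : mixArrow a b hs (n + 1) = mixArrow b a hs' (n + 1) := by
      apply Subtype.ext
      ext i
      show ((mixFun a.1 b.1 (n + 1) i : Fin (n' + 1)) : ℕ) =
        ((mixFun b.1 a.1 (n + 1) i : Fin (n' + 1)) : ℕ)
      rw [mixFun_top, mixFun_top, min_comm]
    rw [heq] at hA
    exact Relation.EqvGen.trans _ _ _ hA (Relation.EqvGen.symm _ _ hB)
  · intro h
    induction h with
    | rel u v huv => exact simRel_of_elem huv
    | refl u => exact fun i => idInt_refl x' (u.1 i)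
    | symm u v _ ih => exact fun i => idInt_symm x' (ih i)
    | trans u v w _ _ ih1 ih2 => exact fun i => idInt_trans x' (ih1 i) (ih2 i)
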